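/- Let 𝒟 ∈ ℝ^{n×n} be invertible with inverse 𝒳 = 𝒟^{-1}. Let U ⊆ [n] with |U| = u, and partition 𝒳 = [𝒳_U, 𝒳_{-U}] (columns indexed by U and its complement) and 𝒟 into rows 𝒟_U and 𝒟_{-U}. Then the Moore-Penrose pseudoinverse of 𝒟_{-U} ∈ ℝ^{(n-u)×n} is given by 𝒟_{-U}^+ = A_U 𝒳_{-U}, where A_U = I_n − 𝒳_U(𝒳_U'𝒳_U)^{-1}𝒳_U' is the orthogonal antiprojection onto the column span of 𝒳_U. -/

import Mathlib

open Matrix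

/-- Moore–Penrose pseudoinverse via matrix inversion: if `D` is invertible with
inverse `X`, `Dm` is the submatrix of rows of `D` outside `U`, `XU` and `Xm`
are the submatrices of columns of `X` inside and outside `U`, and
`AU = I − XU (XUᵀ XU)⁻¹ XUᵀ`, then `AU * Xm` satisfies the four Moore–Penrose
equations for `Dm`, i.e. it is the Moore–Penrose pseudoinverse of `Dm`. -/
theorem moore_penrose_of_inverse
    (n : ℕ) (D X : Matrix (Fin n) (Fin n) ℝ)
    (hDX : D * X = 1) (hXD : X * D = 1)
    (U : Finset (Fin n))
    (Dm : Matrix {i : Fin n // i ∉ U} (Fin n) ℝ)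
    (hDm : ∀ (i : {i : Fin n // i ∉ U}) (j : Fin n), Dm i j = D i.1 j)
    (XU : Matrix (Fin n) {i : Fin n // i ∈ U} ℝ)
    (hXU : ∀ (i : Fin n) (j : {i : Fin n // i ∈ U}), XU i j = X i j.1)
    (Xm : Matrix (Fin n) {i : Fin n // i ∉ U} ℝ)
    (hXm : ∀ (i : Fin n) (j : {i : Fin n // i ∉ U}), Xm i j = X i j.1)
    (hinv : IsUnit (XUᵀ * XU))
    (AU : Matrix (Fin n) (Fin n) ℝ)
    (hAU : AU = 1 - XU * (XUᵀ * XU)⁻¹ * XUᵀ) :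
    Dm * (AU * Xm) * Dm = Dm ∧
    (AU * Xm) * Dm * (AU * Xm) = AU * Xm ∧
    (Dm * (AU * Xm))ᵀ = Dm * (AU * Xm) ∧
    ((AU * Xm) * Dm)ᵀ = (AU * Xm) * Dm := by
  have hdet : IsUnit (XUᵀ * XU).det := (Matrix.isUnit_iff_isUnit_det _).mp hinv
  have hinvmul : (XUᵀ * XU)⁻¹ * (XUᵀ * XU) = 1 := Matrix.nonsing_inv_mul _ hdet
  -- AU kills XU
  have hAUXU : AU * XU = 0 := by
    rw [hAU, Matrix.sub_mul, Matrix.one_mul, Matrix.mul_assoc, Matrix.mul_assoc,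
      hinvmul, Matrix.mul_one, sub_self]
  -- AU is symmetric
  have hAUT : AUᵀ = AU := by
    have hsym : (XUᵀ * XU)ᵀ = XUᵀ * XU := by
      rw [Matrix.transpose_mul, Matrix.transpose_transpose]
    rw [hAU]
    simp [Matrix.transpose_sub, Matrix.transpose_mul, Matrix.transpose_nonsing_inv,
      hsym, Matrix.mul_assoc]
  -- Dm * XU = 0
  have hDmXU : Dm * XU = 0 := by
    ext i j
    have h := congrFun (congrFun hDX i.1) j.1
    have hne : i.1 ≠ j.1 := fun h' => i.2 (h' ▸ j.2)
    simp only [Matrix.mul_apply, Matrix.one_apply, hne, if_neg hne] at h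
    simp only [Matrix.mul_apply, hDm, hXU, Matrix.zero_apply]
    exact h
  -- Dm * Xm = 1
  have hDmXm : Dm * Xm = 1 := by
    ext i j
    have h := congrFun (congrFun hDX i.1) j.1
    simp only [Matrix.mul_apply, Matrix.one_apply] at h ⊢
    simp only [hDm, hXm]
    rw [h]
    simp [Subtype.ext_iff]
  -- Xm * Dm = 1 - XU * DU
  set DU : Matrix {i : Fin n // i ∈ U} (Fin n) ℝ := fun i j => D i.1 j with hDU
  have hsplit : XU * DU + Xm * Dm = 1 := by
    ext i j
    have h := congrFun (congrFun hXD i) j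
    simp only [Matrix.mul_apply] at h
    simp only [Matrix.add_apply, Matrix.mul_apply, hXU, hXm, hDm]
    simp only [hDU]
    have h1 : ∑ k : {x : Fin n // x ∈ U}, X i k.1 * D k.1 j
        = ∑ k ∈ U, X i k * D k j := by
      rw [← Finset.sum_subtype U (fun x => Iff.rfl) (fun k => X i k * D k j)]
    have h2 : ∑ k : {x : Fin n // x ∉ U}, X i k.1 * D k.1 j
        = ∑ k ∈ Uᶜ, X i k * D k j := by
      rw [← Finset.sum_subtype Uᶜ (fun x => Finset.mem_compl) (fun k => X i k * D k j)]
    rw [h1, h2, Finset.sum_add_sum_compl, h]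
  have hXmDm : Xm * Dm = 1 - XU * DU := by
    rw [← hsplit, add_sub_cancel_left]
  -- AU * (Xm * Dm) = AU
  have hAUXmDm : AU * (Xm * Dm) = AU := by
    rw [hXmDm, Matrix.mul_sub, Matrix.mul_one, ← Matrix.mul_assoc, hAUXU,
      Matrix.zero_mul, sub_zero]
  -- Dm * (AU * Xm) = 1
  have hDmAUXm : Dm * (AU * Xm) = 1 := by
    rw [hAU, Matrix.sub_mul, Matrix.one_mul, Matrix.mul_sub, hDmXm,
      ← Matrix.mul_assoc, ← Matrix.mul_assoc, ← Matrix.mul_assoc, hDmXU,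
      Matrix.zero_mul, Matrix.zero_mul, Matrix.zero_mul, sub_zero]
  refine ⟨?_, ?_, ?_, ?_⟩
  · rw [hDmAUXm, Matrix.one_mul]
  · rw [Matrix.mul_assoc, hDmAUXm, Matrix.mul_one]
  · rw [hDmAUXm, Matrix.transpose_one]
  · rw [Matrix.mul_assoc, hAUXmDm, hAUT]
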